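/- Let λ and μ be positive roots with λ ⪯ μ. If μ is a minimal root, then λ is a minimal root. -/

import Mathlib

open Real

variable {B : Type*}

/-- The pairing constant `⟨α_s, α_t⟩` of the standard bilinear form:
`-cos (π / M s t)` if `M s t ≠ 0`, and `-1` if `M s t = 0` (i.e. `m_{s,t} = ∞`). -/
noncomputable def pairing (M : CoxeterMatrix B) (s t : B) : ℝ :=
  if M s t = 0 then -1 else -Real.cos (Real.pi / (M s t : ℝ))

/-- The standard symmetric bilinear form on `V = B → ℝ`. -/
noncomputable def form [Fintype B] (M : CoxeterMatrix B) (v w : B → ℝ) : ℝ :=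
  ∑ s, ∑ t, v s * w t * pairing M s t

/-- The simple root `α_s`, i.e. the standard basis vector at `s`. -/
noncomputable def sroot [DecidableEq B] (s : B) : B → ℝ := Pi.single s 1

/-- `λ` is a root: `λ = ρ(w) α_s` for some `w ∈ W`, `s ∈ B`. -/
def IsRoot [DecidableEq B] (M : CoxeterMatrix B)
    (ρ : M.Group →* Module.End ℝ (B → ℝ)) (lam : B → ℝ) : Prop :=
  ∃ (w : M.Group) (s : B), ρ w (sroot s) = lam

/-- `λ` is positive: all coordinates are nonnegative. -/
def IsPos (lam : B → ℝ) : Prop := ∀ s, 0 ≤ lam s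

/-- `λ` is negative: all coordinates are nonpositive. -/
def IsNeg (lam : B → ℝ) : Prop := ∀ s, lam s ≤ 0

/-- `λ` is a positive root. -/
def IsPosRoot [DecidableEq B] (M : CoxeterMatrix B)
    (ρ : M.Group →* Module.End ℝ (B → ℝ)) (lam : B → ℝ) : Prop :=
  IsRoot M ρ lam ∧ IsPos lam

/-- `λ` dominates `μ`: for every `w ∈ W`, if `ρ(w) μ` is positive then so is `ρ(w) λ`. -/
def Dominates (M : CoxeterMatrix B)
    (ρ : M.Group →* Module.End ℝ (B → ℝ)) (lam mu : B → ℝ) : Prop :=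
  ∀ w : M.Group, IsPos (ρ w mu) → IsPos (ρ w lam)

/-- `λ` is a minimal root: a positive root dominating no positive root other than itself. -/
def IsMinimal [DecidableEq B] (M : CoxeterMatrix B)
    (ρ : M.Group →* Module.End ℝ (B → ℝ)) (lam : B → ℝ) : Prop :=
  IsPosRoot M ρ lam ∧
    ∀ mu, IsPosRoot M ρ mu → Dominates M ρ lam mu → mu = lam

/-- The depth `δ(λ)` of a positive root:
the least Coxeter length of a `w ∈ W` with `ρ(w⁻¹) λ` negative. -/
noncomputable def depth (M : CoxeterMatrix B)
    (ρ : M.Group →* Module.End ℝ (B → ℝ)) (lam : B → ℝ) : ℕ :=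
  sInf {n | ∃ w : M.Group, IsNeg (ρ w⁻¹ lam) ∧ M.toCoxeterSystem.length w = n}

/-- The partial order `λ ⪯ μ` on positive roots:
`μ = ρ(w) λ` for some `w` with `δ(μ) = ℓ(w) + δ(λ)`. -/
def PLE (M : CoxeterMatrix B)
    (ρ : M.Group →* Module.End ℝ (B → ℝ)) (lam mu : B → ℝ) : Prop :=
  ∃ w : M.Group, mu = ρ w lam ∧
    depth M ρ mu = M.toCoxeterSystem.length w + depth M ρ lam

/-- The Coxeter graph of `M`: distinct `s`, `t` are adjacent iff `M s t ≥ 3` or `M s t = 0`. -/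
def coxGraph (M : CoxeterMatrix B) : SimpleGraph B where
  Adj s t := s ≠ t ∧ (M s t = 0 ∨ 3 ≤ M s t)
  symm := by
    constructor
    intro s t h
    exact ⟨h.1.symm, by rw [M.symmetric t s]; exact h.2⟩
  loopless := by constructor; intro s h; exact h.1 rfl

/-- The support of a vector `λ ∈ V`. -/
def supp (lam : B → ℝ) : Set B := {s | lam s ≠ 0}

set_option linter.unusedSectionVars false

section aux
variable [DecidableEq B] [Fintype B] (M : CoxeterMatrix B)

lemma pairing_symm (s t : B) : pairing M s t = pairing M t s := by
  simp [pairing, M.symmetric s t]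

lemma pairing_self (s : B) : pairing M s s = 1 := by
  simp [pairing, M.diagonal s, Real.cos_pi]

lemma form_symm (u v : B → ℝ) : form M u v = form M v u := by
  rw [form, Finset.sum_comm]
  exact Finset.sum_congr rfl fun s _ => Finset.sum_congr rfl fun t _ => by
    rw [pairing_symm M t s]; ring

lemma form_smul_left (c : ℝ) (u v : B → ℝ) : form M (c • u) v = c * form M u v := by
  simp only [form, Pi.smul_apply, smul_eq_mul, Finset.mul_sum]
  exact Finset.sum_congr rfl fun s _ => Finset.sum_congr rfl fun t _ => by ring

lemma form_add_left (u u' v : B → ℝ) : form M (u + u') v = form M u v + form M u' v := by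
  simp only [form, Pi.add_apply, ← Finset.sum_add_distrib]
  exact Finset.sum_congr rfl fun s _ => Finset.sum_congr rfl fun t _ => by ring

lemma form_sub_left (u u' v : B → ℝ) : form M (u - u') v = form M u v - form M u' v := by
  simp only [form, Pi.sub_apply, ← Finset.sum_sub_distrib]
  exact Finset.sum_congr rfl fun s _ => Finset.sum_congr rfl fun t _ => by ring

lemma form_smul_right (c : ℝ) (u v : B → ℝ) : form M u (c • v) = c * form M u v := by
  rw [form_symm, form_smul_left, form_symm]

lemma form_sub_right (u v v' : B → ℝ) : form M u (v - v') = form M u v - form M u v' := by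
  rw [form_symm, form_sub_left, form_symm M v u, form_symm M v' u]

lemma form_add_right (u v v' : B → ℝ) : form M u (v + v') = form M u v + form M u v' := by
  rw [form_symm, form_add_left, form_symm M v u, form_symm M v' u]

lemma form_sroot_sroot (s t : B) : form M (sroot s) (sroot t) = pairing M s t := by
  simp [form, sroot, Pi.single_apply, ite_mul, Finset.sum_ite_eq]

lemma form_sroot_self (s : B) : form M (sroot s) (sroot s) = 1 := by
  rw [form_sroot_sroot, pairing_self]


lemma form_sub_left' (u u' v : B → ℝ) : form M (u - u') v = form M u v - form M u' v :=
  form_sub_left M u u' v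

variable (ρ : M.Group →* Module.End ℝ (B → ℝ))
    (hρ : ∀ (s : B) (v : B → ℝ),
      ρ (M.simple s) v = v - (2 * form M v (sroot s)) • sroot s)


lemma rho_mul_apply (w g : M.Group) (v : B → ℝ) : ρ (w * g) v = ρ w (ρ g v) := by
  rw [map_mul]; rfl

lemma rho_one_apply (v : B → ℝ) : ρ 1 v = v := by rw [map_one]; rfl

lemma rho_simple_simple (i : B) (v : B → ℝ) :
    ρ (M.simple i) (ρ (M.simple i) v) = v := by
  rw [← rho_mul_apply]
  have : M.simple i * M.simple i = 1 := M.toCoxeterSystem.simple_mul_simple_self i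
  rw [this, rho_one_apply]

include hρ in
lemma rho_simple_sroot (i t : B) :
    ρ (M.simple i) (sroot t) = sroot t - (2 * pairing M t i) • sroot i := by
  rw [hρ, form_sroot_sroot]

include hρ in
lemma rho_simple_sroot_self (i : B) : ρ (M.simple i) (sroot i) = -sroot i := by
  rw [rho_simple_sroot M ρ hρ, pairing_self]
  module

include hρ in
lemma form_rho_simple (i : B) (u v : B → ℝ) :
    form M (ρ (M.simple i) u) (ρ (M.simple i) v) = form M u v := by
  rw [hρ, hρ]
  rw [form_sub_left', form_sub_right, form_sub_right, form_smul_left, form_smul_right,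
    form_smul_left, form_smul_right, form_sroot_self]
  have h1 : form M (sroot i) v = form M v (sroot i) := form_symm M _ _
  rw [h1]; ring

include hρ in
lemma form_rho (w : M.Group) (u v : B → ℝ) :
    form M (ρ w u) (ρ w v) = form M u v := by
  obtain ⟨ω, rfl⟩ := M.toCoxeterSystem.wordProd_surjective w
  induction ω generalizing u v with
  | nil => rw [CoxeterSystem.wordProd_nil, rho_one_apply, rho_one_apply]
  | cons i ω ih =>
      rw [CoxeterSystem.wordProd_cons, rho_mul_apply, rho_mul_apply]
      have hs : M.toCoxeterSystem.simple i = M.simple i := rfl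
      rw [hs, form_rho_simple M ρ hρ, ih]

include hρ in
lemma root_norm (lam : B → ℝ) (h : IsRoot M ρ lam) : form M lam lam = 1 := by
  obtain ⟨w, s, rfl⟩ := h
  rw [form_rho M ρ hρ, form_sroot_self]

lemma sroot_ne_zero (s : B) : sroot (B := B) s ≠ 0 := by
  intro h
  have := congrFun h s
  simp [sroot] at this

lemma root_ne_zero (lam : B → ℝ) (h : IsRoot M ρ lam) : lam ≠ 0 := by
  obtain ⟨w, s, rfl⟩ := h
  intro h0
  have : ρ w⁻¹ (ρ w (sroot s)) = ρ w⁻¹ 0 := by rw [h0]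
  rw [← rho_mul_apply, inv_mul_cancel, rho_one_apply, map_zero] at this
  exact sroot_ne_zero s this

lemma isRoot_rho (w : M.Group) (lam : B → ℝ) (h : IsRoot M ρ lam) :
    IsRoot M ρ (ρ w lam) := by
  obtain ⟨v, s, rfl⟩ := h
  exact ⟨w * v, s, (rho_mul_apply M ρ w v _)⟩

lemma pos_neg_zero (lam : B → ℝ) (h1 : IsPos lam) (h2 : IsNeg lam) : lam = 0 := by
  funext s; exact le_antisymm (h2 s) (h1 s)

end aux


/-- Coefficient recursion for the action of alternating words on `α_s`. -/
noncomputable def coefAB (c : ℝ) : ℕ → ℝ × ℝ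
  | 0 => (1, 0)
  | (k+1) => if Even k then ((coefAB c k).1, 2*c*(coefAB c k).1 - (coefAB c k).2)
             else (2*c*(coefAB c k).2 - (coefAB c k).1, (coefAB c k).2)

section coef
variable [DecidableEq B] [Fintype B] (M : CoxeterMatrix B)
variable (ρ : M.Group →* Module.End ℝ (B → ℝ))
    (hρ : ∀ (s : B) (v : B → ℝ),
      ρ (M.simple s) v = v - (2 * form M v (sroot s)) • sroot s)

include hρ in
lemma coef_action (s t : B) (hst : s ≠ t) (k : ℕ) :
    ρ (M.toCoxeterSystem.wordProd (CoxeterSystem.alternatingWord s t k)) (sroot s)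
      = (coefAB (-pairing M s t) k).1 • sroot s + (coefAB (-pairing M s t) k).2 • sroot t := by
  set c := -pairing M s t with hc
  induction k with
  | zero =>
      simp only [CoxeterSystem.alternatingWord, CoxeterSystem.wordProd_nil, rho_one_apply,
        coefAB]
      module
  | succ k ih =>
      rw [CoxeterSystem.alternatingWord_succ', CoxeterSystem.wordProd_cons, rho_mul_apply]
      rw [ih]
      by_cases hk : Even k
      · simp only [hk, if_true, coefAB]
        have hs : M.toCoxeterSystem.simple t = M.simple t := rfl
        rw [hs, hρ]
        rw [form_add_left, form_smul_left, form_smul_left, form_sroot_sroot, form_sroot_self]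
        have hcc : pairing M s t = -c := by rw [hc]; ring
        rw [hcc]
        module
      · simp only [hk, if_false, coefAB]
        have hs : M.toCoxeterSystem.simple s = M.simple s := rfl
        rw [hs, hρ]
        rw [form_add_left, form_smul_left, form_smul_left, form_sroot_self,
          form_symm M (sroot t) (sroot s), form_sroot_sroot]
        have hcc : pairing M s t = -c := by rw [hc]; ring
        rw [hcc]
        module

lemma coef_infinite (k : ℕ) :
    coefAB 1 k = if Even k then ((k:ℝ)+1, (k:ℝ)) else ((k:ℝ), (k:ℝ)+1) := by
  induction k with
  | zero => simp [coefAB]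
  | succ k ih =>
      by_cases hk : Even k
      · have hk1 : ¬ Even (k+1) := by simp [Nat.even_add_one, hk]
        simp only [coefAB, hk, if_true, ih, hk1, if_false, Prod.mk.injEq]
        push_cast; constructor <;> ring
      · have hk1 : Even (k+1) := by simp [Nat.even_add_one, hk]
        simp only [coefAB, hk, if_false, ih, if_true, hk1, Prod.mk.injEq]
        push_cast; constructor <;> ring

lemma coef_finite (θ : ℝ) (k : ℕ) :
    Real.sin θ * (coefAB (Real.cos θ) k).1
        = (if Even k then Real.sin ((k+1)*θ) else Real.sin (k*θ))
      ∧ Real.sin θ * (coefAB (Real.cos θ) k).2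
        = (if Even k then Real.sin (k*θ) else Real.sin ((k+1)*θ)) := by
  induction k with
  | zero => simp [coefAB]
  | succ k ih =>
      obtain ⟨ih1, ih2⟩ := ih
      have key : Real.sin (((k:ℝ)+2)*θ) = 2 * Real.cos θ * Real.sin (((k:ℝ)+1)*θ)
          - Real.sin ((k:ℝ)*θ) := by
        have e1 : ((k:ℝ)+2)*θ = ((k:ℝ)+1)*θ + θ := by ring
        have e2 : (k:ℝ)*θ = ((k:ℝ)+1)*θ - θ := by ring
        rw [e1, e2, Real.sin_add, Real.sin_sub]; ring
      by_cases hk : Even k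
      · have hk1 : ¬ Even (k+1) := by simp [Nat.even_add_one, hk]
        rw [if_pos hk] at ih1 ih2
        simp only [coefAB, hk, if_true, hk1, if_false]
        constructor
        · push_cast; exact ih1
        · have expand : Real.sin θ * (2 * Real.cos θ * (coefAB (Real.cos θ) k).1
              - (coefAB (Real.cos θ) k).2)
              = 2 * Real.cos θ * (Real.sin θ * (coefAB (Real.cos θ) k).1)
                - Real.sin θ * (coefAB (Real.cos θ) k).2 := by ring
          rw [expand, ih1, ih2]
          push_cast
          rw [show ((k:ℝ) + 1 + 1) = (k:ℝ) + 2 by ring]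
          linarith [key]
      · have hk1 : Even (k+1) := by simp [Nat.even_add_one, hk]
        rw [if_neg hk] at ih1 ih2
        simp only [coefAB, hk, if_false, hk1, if_true]
        constructor
        · have expand : Real.sin θ * (2 * Real.cos θ * (coefAB (Real.cos θ) k).2
              - (coefAB (Real.cos θ) k).1)
              = 2 * Real.cos θ * (Real.sin θ * (coefAB (Real.cos θ) k).2)
                - Real.sin θ * (coefAB (Real.cos θ) k).1 := by ring
          rw [expand, ih1, ih2]
          push_cast
          rw [show ((k:ℝ) + 1 + 1) = (k:ℝ) + 2 by ring]
          linarith [key]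
        · push_cast; exact ih2

lemma coef_nonneg (s t : B) (hst : s ≠ t) (k : ℕ)
    (hbound : M s t = 0 ∨ k + 1 ≤ M s t) :
    0 ≤ (coefAB (-pairing M s t) k).1 ∧ 0 ≤ (coefAB (-pairing M s t) k).2 := by
  rcases hbound with h0 | hb
  · have hc : -pairing M s t = 1 := by simp [pairing, h0]
    rw [hc, coef_infinite]
    by_cases hk : Even k <;> simp [hk] <;> positivity
  · have hm0 : M s t ≠ 0 := by omega
    have hm2 : 2 ≤ M s t := by
      have := M.off_diagonal s t hst; omega
    set m := M s t with hm
    have hc : -pairing M s t = Real.cos (Real.pi / m) := by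
      rw [pairing, ← hm, if_neg hm0, neg_neg]
    set θ := Real.pi / (m:ℝ) with hθ
    have hmR : (1:ℝ) < (m:ℝ) := by exact_mod_cast hm2.trans_lt' (by norm_num)
    have hθpos : 0 < θ := by
      apply div_pos Real.pi_pos; linarith
    have hθlt : θ < Real.pi := by
      rw [hθ]; exact div_lt_self Real.pi_pos hmR
    have hsin : 0 < Real.sin θ := Real.sin_pos_of_pos_of_lt_pi hθpos hθlt
    have hstep : ∀ j : ℕ, j ≤ m → 0 ≤ Real.sin (j * θ) := by
      intro j hj
      apply Real.sin_nonneg_of_nonneg_of_le_pi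
      · positivity
      · rw [hθ]
        calc (j:ℝ) * (Real.pi / (m:ℝ)) = (j:ℝ) * Real.pi / (m:ℝ) := by ring
          _ ≤ (m:ℝ) * Real.pi / (m:ℝ) := by
              apply div_le_div_of_nonneg_right ?_ (by linarith)
              exact mul_le_mul_of_nonneg_right (by exact_mod_cast hj) Real.pi_pos.le
          _ = Real.pi := by field_simp
    rw [hc]
    obtain ⟨h1, h2⟩ := coef_finite θ k
    have hs1 : 0 ≤ Real.sin (((k:ℝ)+1)*θ) := by
      have := hstep (k+1) (by omega); push_cast at this; exact this
    have hs0 : 0 ≤ Real.sin ((k:ℝ)*θ) := hstep k (by omega)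
    have hA : 0 ≤ Real.sin θ * (coefAB (Real.cos θ) k).1 := by
      rw [h1]; by_cases hk : Even k
      · simpa [hk] using hs1
      · simpa [hk] using hs0
    have hB : 0 ≤ Real.sin θ * (coefAB (Real.cos θ) k).2 := by
      rw [h2]; by_cases hk : Even k
      · simpa [hk] using hs0
      · simpa [hk] using hs1
    exact ⟨by nlinarith [hsin, hA], by nlinarith [hsin, hB]⟩
end coef

section main
variable [DecidableEq B] [Fintype B] (M : CoxeterMatrix B)
variable (ρ : M.Group →* Module.End ℝ (B → ℝ))
    (hρ : ∀ (s : B) (v : B → ℝ),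
      ρ (M.simple s) v = v - (2 * form M v (sroot s)) • sroot s)

local notation "aw" => CoxeterSystem.alternatingWord

lemma sroot_pos (i : B) : IsPos (sroot (B := B) i) := by
  intro u
  by_cases h : u = i <;> simp [sroot, Pi.single_apply, h]

include hρ in
lemma inner_peel (N : ℕ)
    (IH : ∀ (v : M.Group) (j : B), M.toCoxeterSystem.length v < N →
      ¬ M.toCoxeterSystem.IsRightDescent v j → IsPos (ρ v (sroot j)))
    (s t : B) (hst : s ≠ t) :
    ∀ (J : ℕ) (v : M.Group) (k : ℕ), M.toCoxeterSystem.length v = J → 1 ≤ k →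
      M.toCoxeterSystem.length v + k = N →
      M.toCoxeterSystem.length (v * M.toCoxeterSystem.wordProd (aw t s (k+1))) = N + 1 →
      IsPos (ρ (v * M.toCoxeterSystem.wordProd (aw s t k)) (sroot s)) := by
  intro J
  induction J using Nat.strong_induction_on with
  | _ J ihJ =>
  intro v k hJ hk hN hlen
  -- the element w = v * π(aw s t k) and its extension by s
  have hconcat : aw t s (k+1) = (aw s t k).concat s := CoxeterSystem.alternatingWord_succ t s k
  have hlen' : M.toCoxeterSystem.length (v * M.toCoxeterSystem.wordProd (aw s t k) * M.toCoxeterSystem.simple s) = N + 1 := by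
    rw [hconcat, M.toCoxeterSystem.wordProd_concat, ← mul_assoc] at hlen
    exact hlen
  have hw_le : M.toCoxeterSystem.length (v * M.toCoxeterSystem.wordProd (aw s t k)) ≤ N := by
    calc M.toCoxeterSystem.length (v * M.toCoxeterSystem.wordProd (aw s t k))
        ≤ M.toCoxeterSystem.length v + M.toCoxeterSystem.length (M.toCoxeterSystem.wordProd (aw s t k)) := M.toCoxeterSystem.length_mul_le _ _
      _ ≤ M.toCoxeterSystem.length v + (aw s t k).length := by
          have := M.toCoxeterSystem.length_wordProd_le (aw s t k); omega
      _ = M.toCoxeterSystem.length v + k := by rw [CoxeterSystem.length_alternatingWord]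
      _ = N := hN
  have hw_ge : N ≤ M.toCoxeterSystem.length (v * M.toCoxeterSystem.wordProd (aw s t k)) := by
    have h1 := M.toCoxeterSystem.length_mul_le (v * M.toCoxeterSystem.wordProd (aw s t k)) (M.toCoxeterSystem.simple s)
    rw [M.toCoxeterSystem.length_simple] at h1
    omega
  have hw : M.toCoxeterSystem.length (v * M.toCoxeterSystem.wordProd (aw s t k)) = N := le_antisymm hw_le hw_ge
  by_cases hd : M.toCoxeterSystem.IsRightDescent v (if Even k then t else s)
  · -- peel one more letter
    set t' := if Even k then t else s with ht'
    have hv' : M.toCoxeterSystem.length (v * M.toCoxeterSystem.simple t') + 1 = M.toCoxeterSystem.length v :=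
      (M.toCoxeterSystem.isRightDescent_iff).mp hd
    have hJ1 : 1 ≤ J := by omega
    have hhead : aw s t (k+1) = t' :: aw s t k := by
      rw [CoxeterSystem.alternatingWord_succ' s t k]
    have hcancel : ∀ P : M.Group, (v * M.toCoxeterSystem.simple t') * (M.toCoxeterSystem.simple t' * P) = v * P := by
      intro P
      rw [mul_assoc, ← mul_assoc (M.toCoxeterSystem.simple t'), M.toCoxeterSystem.simple_mul_simple_self, one_mul]
    have hsame : (v * M.toCoxeterSystem.simple t') * M.toCoxeterSystem.wordProd (aw s t (k+1))
        = v * M.toCoxeterSystem.wordProd (aw s t k) := by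
      rw [hhead, M.toCoxeterSystem.wordProd_cons, hcancel]
    have hhead2 : aw t s (k+2) = t' :: aw t s (k+1) := by
      rw [CoxeterSystem.alternatingWord_succ' t s (k+1)]
      congr 1
      rcases Nat.even_or_odd k with he | ho
      · have : ¬ Even (k+1) := by simp [Nat.even_add_one, he]
        simp [this, ht', he]
      · have h1 : Even (k+1) := by simp [Nat.even_add_one, Nat.not_even_iff_odd.mpr ho]
        have h2 : ¬ Even k := Nat.not_even_iff_odd.mpr ho
        simp [h1, ht', h2]
    have hsame2 : (v * M.toCoxeterSystem.simple t') * M.toCoxeterSystem.wordProd (aw t s (k+2))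
        = v * M.toCoxeterSystem.wordProd (aw t s (k+1)) := by
      rw [hhead2, M.toCoxeterSystem.wordProd_cons, hcancel]
    have := ihJ (J-1) (by omega) (v * M.toCoxeterSystem.simple t') (k+1) (by omega) (by omega)
      (by omega) (by rw [hsame2]; exact hlen)
    rw [hsame] at this
    exact this
  · -- no more peeling possible: both letters are non-descents of v
    set t' := if Even k then t else s with ht'
    set e := if Even k then s else t with he
    have hde : ¬ M.toCoxeterSystem.IsRightDescent v e := by
      intro hd2
      obtain ⟨k', rfl⟩ : ∃ k', k = k' + 1 := ⟨k - 1, by omega⟩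
      have hhead : aw s t (k'+1) = e :: aw s t k' := by
        rw [CoxeterSystem.alternatingWord_succ' s t k']
        congr 1
        rcases Nat.even_or_odd k' with hek | hok
        · have : ¬ Even (k'+1) := by simp [Nat.even_add_one, hek]
          simp [he, this, hek]
        · have h1 : Even (k'+1) := by simp [Nat.even_add_one, Nat.not_even_iff_odd.mpr hok]
          have h2 : ¬ Even k' := Nat.not_even_iff_odd.mpr hok
          simp [he, h1, h2]
      have hv2 : M.toCoxeterSystem.length (v * M.toCoxeterSystem.simple e) + 1 = M.toCoxeterSystem.length v :=
        (M.toCoxeterSystem.isRightDescent_iff).mp hd2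
      have hsplit : v * M.toCoxeterSystem.wordProd (aw s t (k'+1))
          = (v * M.toCoxeterSystem.simple e) * M.toCoxeterSystem.wordProd (aw s t k') := by
        rw [hhead, M.toCoxeterSystem.wordProd_cons, ← mul_assoc]
      have hb : M.toCoxeterSystem.length (v * M.toCoxeterSystem.wordProd (aw s t (k'+1))) ≤ N - 2 := by
        rw [hsplit]
        calc M.toCoxeterSystem.length ((v * M.toCoxeterSystem.simple e) * M.toCoxeterSystem.wordProd (aw s t k'))
            ≤ M.toCoxeterSystem.length (v * M.toCoxeterSystem.simple e) + M.toCoxeterSystem.length (M.toCoxeterSystem.wordProd (aw s t k')) :=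
              M.toCoxeterSystem.length_mul_le _ _
          _ ≤ M.toCoxeterSystem.length (v * M.toCoxeterSystem.simple e) + k' := by
              have h5 := M.toCoxeterSystem.length_wordProd_le (aw s t k')
              have h6 := CoxeterSystem.length_alternatingWord s t k'
              omega
          _ ≤ N - 2 := by omega
      omega
    have hds : ¬ M.toCoxeterSystem.IsRightDescent v s ∧ ¬ M.toCoxeterSystem.IsRightDescent v t := by
      rcases Nat.even_or_odd k with hek | hok
      · rw [ht'] at hd; rw [he] at hde
        simp only [hek, if_true] at hd hde
        exact ⟨hde, hd⟩
      · have h2 : ¬ Even k := Nat.not_even_iff_odd.mpr hok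
        rw [ht'] at hd; rw [he] at hde
        simp only [h2, if_false] at hd hde
        exact ⟨hd, hde⟩
    have hvlt : M.toCoxeterSystem.length v < N := by omega
    have hvs : IsPos (ρ v (sroot s)) := IH v s hvlt hds.1
    have hvt : IsPos (ρ v (sroot t)) := IH v t hvlt hds.2
    -- the alternating word of length k+1 is reduced, giving the bound on M s t
    have hred : M.toCoxeterSystem.IsReduced (aw t s (k+1)) := by
      have hge : k + 1 ≤ M.toCoxeterSystem.length (M.toCoxeterSystem.wordProd (aw t s (k+1))) := by
        have h7 := M.toCoxeterSystem.length_mul_le v (M.toCoxeterSystem.wordProd (aw t s (k+1)))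
        omega
      have hle2 := M.toCoxeterSystem.length_wordProd_le (aw t s (k+1))
      rw [CoxeterSystem.length_alternatingWord] at hle2
      unfold CoxeterSystem.IsReduced
      rw [CoxeterSystem.length_alternatingWord]
      omega
    have hbound : M s t = 0 ∨ k + 1 ≤ M s t := by
      by_cases h0 : M t s = 0
      · left; rw [M.symmetric]; exact h0
      · right
        by_contra hlt
        have : k + 1 > M t s := by rw [M.symmetric t s]; omega
        exact M.toCoxeterSystem.not_isReduced_alternatingWord t s h0 this hred
    obtain ⟨hA, hB⟩ := coef_nonneg M s t hst k hbound
    have haction := coef_action M ρ hρ s t hst k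
    rw [rho_mul_apply, haction]
    intro u
    have : ρ v ((coefAB (-pairing M s t) k).1 • sroot s + (coefAB (-pairing M s t) k).2 • sroot t)
        = (coefAB (-pairing M s t) k).1 • ρ v (sroot s)
          + (coefAB (-pairing M s t) k).2 • ρ v (sroot t) := by
      rw [map_add, map_smul, map_smul]
    rw [this]
    simp only [Pi.add_apply, Pi.smul_apply, smul_eq_mul]
    exact add_nonneg (mul_nonneg hA (hvs u)) (mul_nonneg hB (hvt u))

include hρ in
lemma pos_of_not_rightDescent (w : M.Group) (i : B)
    (hnd : ¬ M.toCoxeterSystem.IsRightDescent w i) : IsPos (ρ w (sroot i)) := by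
  suffices h : ∀ (N : ℕ) (w : M.Group) (i : B), M.toCoxeterSystem.length w = N →
      ¬ M.toCoxeterSystem.IsRightDescent w i → IsPos (ρ w (sroot i)) by
    exact h _ w i rfl hnd
  clear hnd w i
  intro N
  induction N using Nat.strong_induction_on with
  | _ N ihN =>
  intro w i hN hnd
  rcases Nat.eq_zero_or_pos N with h0 | hpos
  · have hw1 : w = 1 := M.toCoxeterSystem.length_eq_zero_iff.mp (by omega)
    subst hw1
    rw [rho_one_apply]
    exact sroot_pos i
  · have hw1 : w ≠ 1 := by
      intro h; rw [h, M.toCoxeterSystem.length_one] at hN; omega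
    obtain ⟨t, ht⟩ := M.toCoxeterSystem.exists_rightDescent_of_ne_one hw1
    have hti : i ≠ t := by rintro rfl; exact hnd ht
    have hvlen : M.toCoxeterSystem.length (w * M.toCoxeterSystem.simple t) + 1 = M.toCoxeterSystem.length w :=
      (M.toCoxeterSystem.isRightDescent_iff).mp ht
    have h1 : aw i t 1 = [t] := rfl
    have hw_eq : (w * M.toCoxeterSystem.simple t) * M.toCoxeterSystem.wordProd (aw i t 1) = w := by
      rw [h1, M.toCoxeterSystem.wordProd_singleton, mul_assoc, M.toCoxeterSystem.simple_mul_simple_self, mul_one]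
    have h2 : aw t i 2 = [t, i] := rfl
    have hlen2 : M.toCoxeterSystem.length ((w * M.toCoxeterSystem.simple t) * M.toCoxeterSystem.wordProd (aw t i 2)) = N + 1 := by
      have : M.toCoxeterSystem.wordProd (aw t i 2) = M.toCoxeterSystem.simple t * M.toCoxeterSystem.simple i := by
        rw [h2, M.toCoxeterSystem.wordProd_cons, M.toCoxeterSystem.wordProd_singleton]
      rw [this, ← mul_assoc, mul_assoc w, M.toCoxeterSystem.simple_mul_simple_self, mul_one]
      rw [(M.toCoxeterSystem.not_isRightDescent_iff).mp hnd, hN]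
    have := inner_peel M ρ hρ N
      (fun v j hlt hndv => ihN (M.toCoxeterSystem.length v) hlt v j rfl hndv)
      i t hti (M.toCoxeterSystem.length (w * M.toCoxeterSystem.simple t)) (w * M.toCoxeterSystem.simple t) 1 rfl le_rfl
      (by omega) hlen2
    rw [hw_eq] at this
    exact this

end main

section final
variable [DecidableEq B] [Fintype B] (M : CoxeterMatrix B)
variable (ρ : M.Group →* Module.End ℝ (B → ℝ))
    (hρ : ∀ (s : B) (v : B → ℝ),
      ρ (M.simple s) v = v - (2 * form M v (sroot s)) • sroot s)

lemma simple_inv' (i : B) : (M.simple i)⁻¹ = M.simple i :=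
  M.toCoxeterSystem.inv_simple i

lemma simple_sq' (i : B) : M.simple i * M.simple i = 1 :=
  M.toCoxeterSystem.simple_mul_simple_self i

lemma length_simple' (i : B) : M.toCoxeterSystem.length (M.simple i) = 1 :=
  M.toCoxeterSystem.length_simple i

include hρ in
lemma dichotomy (lam : B → ℝ) (h : IsRoot M ρ lam) : IsPos lam ∨ IsNeg lam := by
  obtain ⟨w, s, rfl⟩ := h
  by_cases hd : M.toCoxeterSystem.IsRightDescent w s
  · right
    have hnd : ¬ M.toCoxeterSystem.IsRightDescent (w * M.simple s) s :=
      (M.toCoxeterSystem.isRightDescent_iff_not_isRightDescent_mul).mp hd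
    have hpos := pos_of_not_rightDescent M ρ hρ (w * M.simple s) s hnd
    have heq : ρ w (sroot s) = - ρ (w * M.simple s) (sroot s) := by
      rw [rho_mul_apply, rho_simple_sroot_self M ρ hρ, map_neg, neg_neg]
    rw [heq]
    intro u
    simp only [Pi.neg_apply, neg_nonpos]
    exact hpos u
  · left
    exact pos_of_not_rightDescent M ρ hρ w s hd

include hρ in
lemma neg_root_killed (nu : B → ℝ) (hroot : IsRoot M ρ nu) (hpos : IsPos nu)
    (i : B) (hneg : ¬ IsPos (ρ (M.simple i) nu)) : nu = sroot i := by
  have hroot' : IsRoot M ρ (ρ (M.simple i) nu) := isRoot_rho M ρ _ _ hroot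
  rcases dichotomy M ρ hρ _ hroot' with hp | hn
  · exact absurd hp hneg
  · have coords : ∀ t, t ≠ i → nu t = 0 := by
      intro t hti
      have h1 := hn t
      rw [hρ] at h1
      simp only [Pi.sub_apply, Pi.smul_apply, smul_eq_mul, sroot, Pi.single_apply,
        if_neg hti, mul_zero, sub_zero] at h1
      exact le_antisymm h1 (hpos t)
    have hnu : nu = nu i • sroot i := by
      funext t
      by_cases hti : t = i
      · subst hti; simp [sroot, Pi.single_apply]
      · simp [sroot, Pi.single_apply, hti, coords t hti]
    have hnorm := root_norm M ρ hρ nu hroot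
    rw [hnu, form_smul_left, form_smul_right, form_sroot_self, mul_one] at hnorm
    have : nu i = 1 := by nlinarith [hpos i]
    rw [hnu, this, one_smul]

lemma depth_neg_le (lam : B → ℝ) (w : M.Group) (hneg : IsNeg (ρ w⁻¹ lam)) :
    depth M ρ lam ≤ M.toCoxeterSystem.length w :=
  Nat.sInf_le ⟨w, hneg, rfl⟩

include hρ in
lemma depth_exists (lam : B → ℝ) (h : IsRoot M ρ lam) :
    ∃ w : M.Group, IsNeg (ρ w⁻¹ lam) ∧ M.toCoxeterSystem.length w = depth M ρ lam := by
  have hne : {n | ∃ w : M.Group, IsNeg (ρ w⁻¹ lam) ∧ M.toCoxeterSystem.length w = n}.Nonempty := by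
    obtain ⟨w, s, rfl⟩ := h
    refine ⟨M.toCoxeterSystem.length (w * M.simple s), w * M.simple s, ?_, rfl⟩
    have : (w * M.simple s)⁻¹ * w = M.simple s := by
      rw [mul_inv_rev, simple_inv' M, mul_assoc, inv_mul_cancel, mul_one]
    rw [← rho_mul_apply, this, rho_simple_sroot_self M ρ hρ]
    intro u
    simp only [Pi.neg_apply, neg_nonpos]
    exact sroot_pos s u
  exact Nat.sInf_mem hne

include hρ in
lemma depth_pos (lam : B → ℝ) (h : IsPosRoot M ρ lam) : 1 ≤ depth M ρ lam := by
  by_contra h0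
  have hd : depth M ρ lam = 0 := by omega
  obtain ⟨w, hw, hl⟩ := depth_exists M ρ hρ lam h.1
  rw [hd] at hl
  have hw1 : w = 1 := M.toCoxeterSystem.length_eq_zero_iff.mp hl
  rw [hw1, inv_one, rho_one_apply] at hw
  exact root_ne_zero M ρ lam h.1 (pos_neg_zero lam h.2 hw)

include hρ in
lemma depth_simple_le (lam : B → ℝ) (i : B) (h : IsRoot M ρ lam) :
    depth M ρ (ρ (M.simple i) lam) ≤ depth M ρ lam + 1 := by
  obtain ⟨v, hv, hl⟩ := depth_exists M ρ hρ lam h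
  have hkey : IsNeg (ρ (M.simple i * v)⁻¹ (ρ (M.simple i) lam)) := by
    have : (M.simple i * v)⁻¹ * M.simple i = v⁻¹ := by
      rw [mul_inv_rev, simple_inv' M, mul_assoc,
        simple_sq' M, mul_one]
    rw [← rho_mul_apply, this]
    exact hv
  have hle := depth_neg_le M ρ (ρ (M.simple i) lam) (M.simple i * v) hkey
  have hl2 : M.toCoxeterSystem.length (M.simple i * v) ≤ M.toCoxeterSystem.length v + 1 := by
    have := M.toCoxeterSystem.length_mul_le (M.simple i) v
    rw [length_simple' M] at this
    omega
  omega

include hρ in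
lemma depth_simple_ge (lam : B → ℝ) (i : B) (h : IsRoot M ρ lam) :
    depth M ρ lam ≤ depth M ρ (ρ (M.simple i) lam) + 1 := by
  have h2 := depth_simple_le M ρ hρ (ρ (M.simple i) lam) i (isRoot_rho M ρ _ _ h)
  rw [rho_simple_simple] at h2
  exact h2

lemma dominates_rho (g : M.Group) (lam nu : B → ℝ) (h : Dominates M ρ lam nu) :
    Dominates M ρ (ρ g lam) (ρ g nu) := by
  intro w hw
  rw [← rho_mul_apply] at hw ⊢
  exact h (w * g) hw

include hρ in
lemma step_lemma (beta nu : B → ℝ) (i : B) (hb : IsPosRoot M ρ beta)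
    (hn : IsPosRoot M ρ nu) (hdom : Dominates M ρ beta nu)
    (hd : depth M ρ (ρ (M.simple i) beta) = depth M ρ beta + 1) :
    IsPos (ρ (M.simple i) nu) := by
  by_contra hneg
  have hnu_eq : nu = sroot i := neg_root_killed M ρ hρ nu hn.1 hn.2 i hneg
  obtain ⟨v, hv, hl⟩ := depth_exists M ρ hρ beta hb.1
  have h1 : ¬ IsPos (ρ v⁻¹ (sroot i)) := by
    intro hp
    have h2 : IsPos (ρ v⁻¹ beta) := hdom v⁻¹ (by rw [← hnu_eq] at hp; exact hp)
    have h3 : ρ v⁻¹ beta = 0 := pos_neg_zero _ h2 hv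
    have h4 : beta = 0 := by
      have := congrArg (ρ v) h3
      rw [← rho_mul_apply, mul_inv_cancel, rho_one_apply, map_zero] at this
      exact this
    exact root_ne_zero M ρ beta hb.1 h4
  have hdesc : M.toCoxeterSystem.IsRightDescent v⁻¹ i := by
    by_contra hnd
    exact h1 (pos_of_not_rightDescent M ρ hρ v⁻¹ i hnd)
  have hkey : IsNeg (ρ (M.simple i * v)⁻¹ (ρ (M.simple i) beta)) := by
    have : (M.simple i * v)⁻¹ * M.simple i = v⁻¹ := by
      rw [mul_inv_rev, simple_inv' M, mul_assoc,
        simple_sq' M, mul_one]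
    rw [← rho_mul_apply, this]
    exact hv
  have hle := depth_neg_le M ρ (ρ (M.simple i) beta) (M.simple i * v) hkey
  have hlen : M.toCoxeterSystem.length (M.simple i * v) + 1 = M.toCoxeterSystem.length v := by
    have e1 : M.toCoxeterSystem.length (v⁻¹ * M.simple i) + 1 = M.toCoxeterSystem.length v⁻¹ :=
      (M.toCoxeterSystem.isRightDescent_iff).mp hdesc
    have e2 : (v⁻¹ * M.simple i)⁻¹ = M.simple i * v := by
      rw [mul_inv_rev, simple_inv' M, inv_inv]
    have e3 := M.toCoxeterSystem.length_inv (v⁻¹ * M.simple i)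
    rw [e2] at e3
    rw [← e3] at e1
    rw [M.toCoxeterSystem.length_inv] at e1
    exact e1
  have hdb := depth_pos M ρ hρ beta hb
  omega

include hρ in
lemma pos_step (beta : B → ℝ) (i : B) (hb : IsPosRoot M ρ beta)
    (hd : depth M ρ (ρ (M.simple i) beta) = depth M ρ beta + 1) :
    IsPos (ρ (M.simple i) beta) := by
  rcases dichotomy M ρ hρ _ (isRoot_rho M ρ (M.simple i) beta hb.1) with hp | hn
  · exact hp
  · exfalso
    have : IsNeg (ρ (1 : M.Group)⁻¹ (ρ (M.simple i) beta)) := by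
      rw [inv_one, rho_one_apply]; exact hn
    have hle := depth_neg_le M ρ (ρ (M.simple i) beta) 1 this
    rw [M.toCoxeterSystem.length_one] at hle
    have := depth_pos M ρ hρ beta hb
    omega

include hρ in
lemma depth_wordProd_le (ω : List B) (lam : B → ℝ) (h : IsRoot M ρ lam) :
    depth M ρ (ρ (M.toCoxeterSystem.wordProd ω) lam) ≤ ω.length + depth M ρ lam := by
  induction ω generalizing lam with
  | nil => rw [M.toCoxeterSystem.wordProd_nil, rho_one_apply]; simp
  | cons i ω ih =>
      rw [M.toCoxeterSystem.wordProd_cons, rho_mul_apply]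
      have hs : M.toCoxeterSystem.simple i = M.simple i := rfl
      rw [hs]
      have h1 := depth_simple_le M ρ hρ (ρ (M.toCoxeterSystem.wordProd ω) lam) i
        (isRoot_rho M ρ _ _ h)
      have h2 := ih lam h
      simp only [List.length_cons]
      omega

include hρ in
lemma chain (ω : List B) (lam nu : B → ℝ) (hlam : IsPosRoot M ρ lam)
    (hnu : IsPosRoot M ρ nu) (hdom : Dominates M ρ lam nu)
    (hdepth : depth M ρ (ρ (M.toCoxeterSystem.wordProd ω) lam)
      = ω.length + depth M ρ lam) :
    IsPosRoot M ρ (ρ (M.toCoxeterSystem.wordProd ω) lam)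
      ∧ IsPosRoot M ρ (ρ (M.toCoxeterSystem.wordProd ω) nu)
      ∧ Dominates M ρ (ρ (M.toCoxeterSystem.wordProd ω) lam)
          (ρ (M.toCoxeterSystem.wordProd ω) nu) := by
  induction ω with
  | nil =>
      rw [M.toCoxeterSystem.wordProd_nil, rho_one_apply, rho_one_apply]
      exact ⟨hlam, hnu, hdom⟩
  | cons i ω ih =>
      have hs : M.toCoxeterSystem.simple i = M.simple i := rfl
      rw [M.toCoxeterSystem.wordProd_cons, rho_mul_apply, hs] at hdepth ⊢
      rw [rho_mul_apply M ρ (M.simple i) (M.toCoxeterSystem.wordProd ω) nu]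
      set beta := ρ (M.toCoxeterSystem.wordProd ω) lam with hbeta
      have h1 : depth M ρ beta ≤ ω.length + depth M ρ lam :=
        depth_wordProd_le M ρ hρ ω lam hlam.1
      have h2 : depth M ρ (ρ (M.simple i) beta) ≤ depth M ρ beta + 1 :=
        depth_simple_le M ρ hρ beta i (isRoot_rho M ρ _ _ hlam.1)
      simp only [List.length_cons] at hdepth
      have hdb : depth M ρ beta = ω.length + depth M ρ lam := by omega
      have hdstep : depth M ρ (ρ (M.simple i) beta) = depth M ρ beta + 1 := by omega
      obtain ⟨hbr, hnr, hdomr⟩ := ih hdb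
      refine ⟨⟨isRoot_rho M ρ _ _ hbr.1, pos_step M ρ hρ beta i hbr hdstep⟩,
        ⟨isRoot_rho M ρ _ _ hnr.1, ?_⟩,
        dominates_rho M ρ (M.simple i) _ _ hdomr⟩
      exact step_lemma M ρ hρ beta _ i hbr hnr hdomr hdstep

end final


theorem statement5 [DecidableEq B] [Fintype B] (M : CoxeterMatrix B)
    (ρ : M.Group →* Module.End ℝ (B → ℝ))
    (hρ : ∀ (s : B) (v : B → ℝ),
      ρ (M.simple s) v = v - (2 * form M v (sroot s)) • sroot s)
    (lam mu : B → ℝ) (hlam : IsPosRoot M ρ lam) (hmu : IsPosRoot M ρ mu)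
    (hle : PLE M ρ lam mu) (hmin : IsMinimal M ρ mu) :
    IsMinimal M ρ lam := by
  obtain ⟨u, hmu_eq, hdep⟩ := hle
  refine ⟨hlam, fun nu hnu hdom => ?_⟩
  obtain ⟨ω, hred, hu⟩ := M.toCoxeterSystem.exists_reduced_word' u
  have hlenω : ω.length = M.toCoxeterSystem.length u := by
    rw [hu]; exact hred.symm
  have hdepth' : depth M ρ (ρ (M.toCoxeterSystem.wordProd ω) lam)
      = ω.length + depth M ρ lam := by
    rw [← hu, ← hmu_eq, hdep, hlenω]
  obtain ⟨hbr, hnr, hdomr⟩ := chain M ρ hρ ω lam nu hlam hnu hdom hdepth'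
  rw [← hu] at hbr hnr hdomr
  have hmineq : ρ u nu = mu := hmin.2 (ρ u nu) hnr (by rw [hmu_eq]; exact hdomr)
  have heq : ρ u nu = ρ u lam := by rw [hmineq, hmu_eq]
  have := congrArg (ρ u⁻¹) heq
  rw [← rho_mul_apply, ← rho_mul_apply, inv_mul_cancel, rho_one_apply, rho_one_apply] at this
  exact this
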